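/- In the three-point loop algebra L = sl2 ⊗ K[T,T^{-1},(T-1)^{-1}], define for m ≥ 1: â_m = -X⊗U_{m-2}(1-2T) + Y⊗T·U_{m-1}(1-2T) + Z⊗(T-1)·U_{m-1}(1-2T), â_{1-m} = X⊗U_{m-1}(1-2T) - Y⊗T·U_{m-2}(1-2T) - Z⊗(T-1)·U_{m-2}(1-2T), and ĝ_m = -X⊗U_{m-1}(1-2T) - Y⊗T·U_{m-1}(1-2T) + Z⊗(T-1)·U_{m-1}(1-2T), where U_n are Chebyshev polynomials of the second kind (U_{-1}=0). Then these elements satisfy the Onsager relations: [â_l, â_m] = 2ĝ_{l-m} for l > m, [ĝ_l, â_m] = â_{m+l} - â_{m-l}, and [ĝ_l, ĝ_m] = 0. -/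

import Mathlib

set_option synthInstance.maxHeartbeats 1000000
set_option maxHeartbeats 1000000

namespace TetPaper
variable {K : Type*} [Field K]

/-- Auxiliary bracket for `sl2` in the `X,Y,Z` coordinates, where
`[X,Y] = 2X+2Y`, `[Y,Z] = 2Y+2Z`, `[Z,X] = 2Z+2X`. -/
def sl2xb (u v : Fin 3 → K) : Fin 3 → K :=
  ![2*(u 0 * v 1 - u 1 * v 0) + 2*(u 2 * v 0 - u 0 * v 2),
    2*(u 0 * v 1 - u 1 * v 0) + 2*(u 1 * v 2 - u 2 * v 1),
    2*(u 2 * v 0 - u 0 * v 2) + 2*(u 1 * v 2 - u 2 * v 1)]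

lemma sl2xb_add_lie (x y z : Fin 3 → K) : sl2xb (x + y) z = sl2xb x z + sl2xb y z := by
  funext i; fin_cases i <;> simp [sl2xb] <;> ring

lemma sl2xb_lie_add (x y z : Fin 3 → K) : sl2xb x (y + z) = sl2xb x y + sl2xb x z := by
  funext i; fin_cases i <;> simp [sl2xb] <;> ring

lemma sl2xb_lie_self (x : Fin 3 → K) : sl2xb x x = 0 := by
  funext i; fin_cases i <;> simp [sl2xb, -mul_eq_zero] <;> ring

lemma sl2xb_leibniz (x y z : Fin 3 → K) :
    sl2xb x (sl2xb y z) = sl2xb (sl2xb x y) z + sl2xb y (sl2xb x z) := by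
  funext i; fin_cases i <;> simp [sl2xb] <;> ring

lemma sl2xb_smul (t : K) (x y : Fin 3 → K) : sl2xb x (t • y) = t • sl2xb x y := by
  funext i; fin_cases i <;> simp [sl2xb] <;> ring

end TetPaper

/-- The Lie algebra over `K` with basis `X, Y, Z` and brackets
`[X,Y] = 2X+2Y`, `[Y,Z] = 2Y+2Z`, `[Z,X] = 2Z+2X`. -/
def Sl2X (K : Type*) := Fin 3 → K

noncomputable instance {K : Type*} [Field K] : AddCommGroup (Sl2X K) :=
  inferInstanceAs (AddCommGroup (Fin 3 → K))

noncomputable instance {K : Type*} [Field K] : Module K (Sl2X K) :=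
  inferInstanceAs (Module K (Fin 3 → K))

noncomputable instance {K : Type*} [Field K] : LieRing (Sl2X K) where
  bracket u v := TetPaper.sl2xb u v
  add_lie x y z := TetPaper.sl2xb_add_lie x y z
  lie_add x y z := TetPaper.sl2xb_lie_add x y z
  lie_self x := TetPaper.sl2xb_lie_self x
  leibniz_lie x y z := TetPaper.sl2xb_leibniz x y z

noncomputable instance {K : Type*} [Field K] : LieAlgebra K (Sl2X K) where
  lie_smul t x y := TetPaper.sl2xb_smul t x y

namespace Sl2X
variable (K : Type*) [Field K]
/-- The basis vector `X`. -/
noncomputable def Xv : Sl2X K := (![1,0,0] : Fin 3 → K)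
/-- The basis vector `Y`. -/
noncomputable def Yv : Sl2X K := (![0,1,0] : Fin 3 → K)
/-- The basis vector `Z`. -/
noncomputable def Zv : Sl2X K := (![0,0,1] : Fin 3 → K)
end Sl2X
open scoped Polynomial

/-- The algebra `K[T, T⁻¹, (T-1)⁻¹]`, realized as the subalgebra of the field of
rational functions generated by `T`, `T⁻¹` and `(T-1)⁻¹`. -/
noncomputable def Arat (K : Type*) [Field K] : Subalgebra K (RatFunc K) :=
  Algebra.adjoin K {RatFunc.X, RatFunc.X⁻¹, (RatFunc.X - 1)⁻¹}

/-- The element `T` of `Arat K`. -/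
noncomputable def tA (K : Type*) [Field K] : Arat K :=
  ⟨RatFunc.X, Algebra.subset_adjoin (by simp)⟩

/-- The element `T⁻¹` of `Arat K`. -/
noncomputable def tiA (K : Type*) [Field K] : Arat K :=
  ⟨RatFunc.X⁻¹, Algebra.subset_adjoin (by simp)⟩

/-- The element `T' = 1 - T⁻¹` of `Arat K`. -/
noncomputable def tpA (K : Type*) [Field K] : Arat K := 1 - tiA K

/-- The element `T'' = (1-T)⁻¹` of `Arat K`. -/
noncomputable def tppA (K : Type*) [Field K] : Arat K :=
  ⟨(1 - RatFunc.X)⁻¹, by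
    have h1 : (RatFunc.X - 1)⁻¹ ∈ Arat K := Algebra.subset_adjoin (by simp)
    have h2 : ((1 : RatFunc K) - RatFunc.X)⁻¹ = -((RatFunc.X - 1)⁻¹) := by
      rw [← neg_sub, inv_neg]
    rw [h2]; exact neg_mem h1⟩

open scoped TensorProduct

/-- The three-point loop algebra `sl2 ⊗ K[T,T⁻¹,(T-1)⁻¹]`
(with the algebra factor written on the left). -/
noncomputable abbrev TPL (K : Type*) [Field K] := (Arat K) ⊗[K] Sl2X K

/-- The element `U_n(1 - 2T)` of `K[T,T⁻¹,(T-1)⁻¹]`, where `U_n` is the `n`-th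
Chebyshev polynomial of the second kind (indexed by `n : ℤ`, with `U_{-1} = 0`). -/
noncomputable def evU (K : Type*) [Field K] (n : ℤ) : Arat K :=
  Polynomial.aeval (1 - 2 * tA K) (Polynomial.Chebyshev.U K n)


namespace Stmt19Aux
open Polynomial.Chebyshev TensorProduct
variable {K : Type*} [Field K]

lemma evU_zero : evU K 0 = 1 := by
  unfold evU; rw [U_zero, map_one]

lemma evU_one : evU K 1 = 2 * (1 - 2 * tA K) := by
  unfold evU; rw [U_one, map_mul, map_ofNat, Polynomial.aeval_X]

lemma evU_neg (n : ℤ) : evU K (-n) = -evU K (n-2) := by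
  unfold evU; rw [U_neg, map_neg]

lemma evU_neg_sub_one (n : ℤ) : evU K (-n-1) = -evU K (n-1) := by
  unfold evU; rw [U_neg_sub_one, map_neg]

lemma urec (n : ℤ) : evU K (n+2) = 2*(1-2*tA K)*evU K (n+1) - evU K n := by
  unfold evU
  rw [U_add_two, map_sub, map_mul, map_mul, map_ofNat, Polynomial.aeval_X]

lemma cheb_ext (f g : ℤ → Arat K)
    (hf : ∀ n : ℤ, f (n+2) = 2*(1-2*tA K)*f (n+1) - f n)
    (hg : ∀ n : ℤ, g (n+2) = 2*(1-2*tA K)*g (n+1) - g n)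
    (h0 : f 0 = g 0) (h1 : f 1 = g 1) : ∀ n : ℤ, f n = g n := by
  have key : ∀ n : ℤ, f n = g n ∧ f (n+1) = g (n+1) := by
    intro n
    induction n using Int.induction_on with
    | zero => exact ⟨h0, by simpa using h1⟩
    | succ k ih =>
      refine ⟨ih.2, ?_⟩
      rw [show ((k:ℤ)+1+1) = (k:ℤ)+2 by ring, hf, hg, ih.1, ih.2]
    | pred k ih =>
      refine ⟨?_, by rw [show (-(k:ℤ)-1+1) = -(k:ℤ) by ring]; exact ih.1⟩
      have Hf := hf (-(k:ℤ)-1)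
      have Hg := hg (-(k:ℤ)-1)
      rw [show (-(k:ℤ)-1+2) = -(k:ℤ)+1 by ring, show (-(k:ℤ)-1+1) = -(k:ℤ) by ring] at Hf Hg
      linear_combination Hf - Hg - ih.2 + (2*(1-2*tA K))*ih.1
  exact fun n => (key n).1

lemma B1 (l : ℤ) : ∀ m : ℤ,
    evU K l * evU K (m+1) - evU K (l+1) * evU K m = evU K (l-m-1) := by
  refine cheb_ext _ _ ?_ ?_ ?_ ?_
  · intro n
    have u1 := urec (K := K) (n+1)
    rw [show ((n:ℤ)+1+2) = n+3 by ring, show ((n:ℤ)+1+1) = n+2 by ring] at u1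
    have u2 := urec (K := K) n
    rw [show ((n:ℤ)+2+1) = n+3 by ring, show ((n:ℤ)+1+1) = n+2 by ring]
    linear_combination (evU K l)*u1 - (evU K (l+1))*u2
  · intro n
    have u := urec (K := K) (l-n-3)
    rw [show (l-n-3+2 : ℤ) = l-n-1 by ring, show (l-n-3+1 : ℤ) = l-n-2 by ring] at u
    rw [show (l-(n+2)-1 : ℤ) = l-n-3 by ring, show (l-(n+1)-1 : ℤ) = l-n-2 by ring]
    linear_combination u
  · have u := urec (K := K) (l-1)
    rw [show (l-1+2 : ℤ) = l+1 by ring, show (l-1+1 : ℤ) = l by ring] at u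
    rw [show ((0:ℤ)+1) = 1 by norm_num, show (l-0-1 : ℤ) = l-1 by ring, evU_zero, evU_one]
    linear_combination -u
  · have u1 := urec (K := K) (l-1)
    rw [show (l-1+2 : ℤ) = l+1 by ring, show (l-1+1 : ℤ) = l by ring] at u1
    have u2 := urec (K := K) (l-2)
    rw [show (l-2+2 : ℤ) = l by ring, show (l-2+1 : ℤ) = l-1 by ring] at u2
    have u0 := urec (K := K) 0
    rw [show ((0:ℤ)+2) = 2 by norm_num, show ((0:ℤ)+1) = 1 by norm_num] at u0
    rw [show ((1:ℤ)+1) = 2 by norm_num, show (l-1-1 : ℤ) = l-2 by ring, u0, evU_zero, evU_one]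
    linear_combination (-(2*(1-2*tA K)))*u1 - u2

lemma C2 (a : ℤ) : ∀ b : ℤ,
    2*((1-2*tA K) * evU K (a+1) - evU K a) * evU K b = evU K (a+b+2) - evU K (a-b) := by
  refine cheb_ext _ _ ?_ ?_ ?_ ?_
  · intro n
    linear_combination (2*((1-2*tA K) * evU K (a+1) - evU K a)) * urec (K := K) n
  · intro n
    have u1 := urec (K := K) (a+n+2)
    rw [show (a+n+2+2 : ℤ) = a+(n+2)+2 by ring, show (a+n+2+1 : ℤ) = a+(n+1)+2 by ring] at u1
    have u2 := urec (K := K) (a-n-2)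
    rw [show (a-n-2+2 : ℤ) = a-n by ring, show (a-n-2+1 : ℤ) = a-(n+1) by ring,
        show (a-n-2 : ℤ) = a-(n+2) by ring] at u2
    linear_combination u1 - u2
  · have u := urec (K := K) a
    rw [show (a+0+2 : ℤ) = a+2 by ring, show (a-0 : ℤ) = a by ring, evU_zero]
    linear_combination -u
  · have u1 := urec (K := K) (a+1)
    rw [show (a+1+1 : ℤ) = a+2 by ring] at u1
    have u2 := urec (K := K) a
    have u3 := urec (K := K) (a-1)
    rw [show (a-1+2 : ℤ) = a+1 by ring, show (a-1+1 : ℤ) = a by ring] at u3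
    rw [evU_one]
    linear_combination -u1 - (2*(1-2*tA K))*u2 + u3


/-- Canonical triple form of elements of `TPL K`. -/
noncomputable def trip (K : Type*) [Field K] (a b c : Arat K) : TPL K :=
  a ⊗ₜ[K] Sl2X.Xv K + b ⊗ₜ[K] Sl2X.Yv K + c ⊗ₜ[K] Sl2X.Zv K

lemma trip_congr {a b c a' b' c' : Arat K} (h1 : a = a') (h2 : b = b') (h3 : c = c') :
    trip K a b c = trip K a' b' c' := by rw [h1, h2, h3]

lemma trip_eq_zero {a b c : Arat K} (h1 : a = 0) (h2 : b = 0) (h3 : c = 0) :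
    trip K a b c = 0 := by
  rw [h1, h2, h3]; simp [trip]

lemma sm2 (x : Arat K) : (2:K) • x = 2 * x := by rw [two_smul, two_mul]

lemma smul_trip (a b c : Arat K) : (2:K) • trip K a b c = trip K (2*a) (2*b) (2*c) := by
  simp only [trip, smul_add, TensorProduct.smul_tmul', sm2]

lemma trip_sub (a b c p q r : Arat K) :
    trip K a b c - trip K p q r = trip K (a-p) (b-q) (c-r) := by
  simp only [trip, TensorProduct.sub_tmul]; abel

lemma lieXY : ⁅Sl2X.Xv K, Sl2X.Yv K⁆ = (2:K) • Sl2X.Xv K + (2:K) • Sl2X.Yv K := by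
  show TetPaper.sl2xb (![1,0,0]) (![0,1,0]) =
    ((2:K) • (![1,0,0] : Fin 3 → K) + (2:K) • (![0,1,0] : Fin 3 → K))
  funext i; fin_cases i <;> simp [TetPaper.sl2xb]

lemma lieYZ : ⁅Sl2X.Yv K, Sl2X.Zv K⁆ = (2:K) • Sl2X.Yv K + (2:K) • Sl2X.Zv K := by
  show TetPaper.sl2xb (![0,1,0]) (![0,0,1]) =
    ((2:K) • (![0,1,0] : Fin 3 → K) + (2:K) • (![0,0,1] : Fin 3 → K))
  funext i; fin_cases i <;> simp [TetPaper.sl2xb]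

lemma lieZX : ⁅Sl2X.Zv K, Sl2X.Xv K⁆ = (2:K) • Sl2X.Zv K + (2:K) • Sl2X.Xv K := by
  show TetPaper.sl2xb (![0,0,1]) (![1,0,0]) =
    ((2:K) • (![0,0,1] : Fin 3 → K) + (2:K) • (![1,0,0] : Fin 3 → K))
  funext i; fin_cases i <;> simp [TetPaper.sl2xb]

open LieAlgebra.ExtendScalars in
lemma bXY (s t : Arat K) : ⁅s ⊗ₜ[K] Sl2X.Xv K, t ⊗ₜ[K] Sl2X.Yv K⁆ =
    (2*(s*t)) ⊗ₜ[K] Sl2X.Xv K + (2*(s*t)) ⊗ₜ[K] Sl2X.Yv K := by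
  rw [bracket_tmul, lieXY, TensorProduct.tmul_add, TensorProduct.tmul_smul,
      TensorProduct.tmul_smul, TensorProduct.smul_tmul', TensorProduct.smul_tmul', sm2]

open LieAlgebra.ExtendScalars in
lemma bYZ (s t : Arat K) : ⁅s ⊗ₜ[K] Sl2X.Yv K, t ⊗ₜ[K] Sl2X.Zv K⁆ =
    (2*(s*t)) ⊗ₜ[K] Sl2X.Yv K + (2*(s*t)) ⊗ₜ[K] Sl2X.Zv K := by
  rw [bracket_tmul, lieYZ, TensorProduct.tmul_add, TensorProduct.tmul_smul,
      TensorProduct.tmul_smul, TensorProduct.smul_tmul', TensorProduct.smul_tmul', sm2]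

open LieAlgebra.ExtendScalars in
lemma bZX (s t : Arat K) : ⁅s ⊗ₜ[K] Sl2X.Zv K, t ⊗ₜ[K] Sl2X.Xv K⁆ =
    (2*(s*t)) ⊗ₜ[K] Sl2X.Zv K + (2*(s*t)) ⊗ₜ[K] Sl2X.Xv K := by
  rw [bracket_tmul, lieZX, TensorProduct.tmul_add, TensorProduct.tmul_smul,
      TensorProduct.tmul_smul, TensorProduct.smul_tmul', TensorProduct.smul_tmul', sm2]

lemma bYX (s t : Arat K) : ⁅s ⊗ₜ[K] Sl2X.Yv K, t ⊗ₜ[K] Sl2X.Xv K⁆ =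
    -((2*(s*t)) ⊗ₜ[K] Sl2X.Xv K) - (2*(s*t)) ⊗ₜ[K] Sl2X.Yv K := by
  rw [← lie_skew, bXY, mul_comm t s]; abel

lemma bZY (s t : Arat K) : ⁅s ⊗ₜ[K] Sl2X.Zv K, t ⊗ₜ[K] Sl2X.Yv K⁆ =
    -((2*(s*t)) ⊗ₜ[K] Sl2X.Yv K) - (2*(s*t)) ⊗ₜ[K] Sl2X.Zv K := by
  rw [← lie_skew, bYZ, mul_comm t s]; abel

lemma bXZ (s t : Arat K) : ⁅s ⊗ₜ[K] Sl2X.Xv K, t ⊗ₜ[K] Sl2X.Zv K⁆ =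
    -((2*(s*t)) ⊗ₜ[K] Sl2X.Zv K) - (2*(s*t)) ⊗ₜ[K] Sl2X.Xv K := by
  rw [← lie_skew, bZX, mul_comm t s]; abel

open LieAlgebra.ExtendScalars in
lemma bVV (s t : Arat K) (v : Sl2X K) : ⁅s ⊗ₜ[K] v, t ⊗ₜ[K] v⁆ = 0 := by
  rw [bracket_tmul, lie_self, TensorProduct.tmul_zero]

lemma tadd_lie (x y z : TPL K) : ⁅x + y, z⁆ = ⁅x,z⁆ + ⁅y,z⁆ := add_lie x y z

lemma tlie_add (x y z : TPL K) : ⁅x, y + z⁆ = ⁅x,y⁆ + ⁅x,z⁆ := lie_add x y z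

lemma trip_lie (a b c p q r : Arat K) :
    ⁅trip K a b c, trip K p q r⁆ =
      trip K (2*(a*q) - 2*(b*p) + (2*(c*p) - 2*(a*r)))
             (2*(a*q) - 2*(b*p) + (2*(b*r) - 2*(c*q)))
             (2*(c*p) - 2*(a*r) + (2*(b*r) - 2*(c*q))) := by
  simp only [trip, tadd_lie, tlie_add, bVV, bXY, bYZ, bZX, bYX, bZY, bXZ,
    TensorProduct.sub_tmul, TensorProduct.add_tmul]
  abel

end Stmt19Aux

open Stmt19Aux

/-- in the three-point loop algebra, the elements
`â_m = -X⊗U_{m-2}(1-2T) + Y⊗T·U_{m-1}(1-2T) + Z⊗(T-1)·U_{m-1}(1-2T)`,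
`â_{1-m} = X⊗U_{m-1}(1-2T) - Y⊗T·U_{m-2}(1-2T) - Z⊗(T-1)·U_{m-2}(1-2T)` and
`ĝ_m = -X⊗U_{m-1}(1-2T) - Y⊗T·U_{m-1}(1-2T) + Z⊗(T-1)·U_{m-1}(1-2T)` (`m ≥ 1`)
satisfy the Onsager relations. -/
theorem stmt19 (K : Type*) [Field K] [CharZero K]
    (ah gh : ℤ → TPL K)
    (hah : ∀ m : ℤ, 1 ≤ m → ah m =
      -(evU K (m-2) ⊗ₜ[K] Sl2X.Xv K)
        + (tA K * evU K (m-1)) ⊗ₜ[K] Sl2X.Yv K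
        + ((tA K - 1) * evU K (m-1)) ⊗ₜ[K] Sl2X.Zv K)
    (hah' : ∀ m : ℤ, 1 ≤ m → ah (1 - m) =
      evU K (m-1) ⊗ₜ[K] Sl2X.Xv K
        - (tA K * evU K (m-2)) ⊗ₜ[K] Sl2X.Yv K
        - ((tA K - 1) * evU K (m-2)) ⊗ₜ[K] Sl2X.Zv K)
    (hgh : ∀ m : ℤ, 1 ≤ m → gh m =
      -(evU K (m-1) ⊗ₜ[K] Sl2X.Xv K)
        - (tA K * evU K (m-1)) ⊗ₜ[K] Sl2X.Yv K
        + ((tA K - 1) * evU K (m-1)) ⊗ₜ[K] Sl2X.Zv K) :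
    (∀ l m : ℤ, m < l → ⁅ah l, ah m⁆ = (2:K) • gh (l - m)) ∧
    (∀ l m : ℤ, 1 ≤ l → ⁅gh l, ah m⁆ = ah (m + l) - ah (m - l)) ∧
    (∀ l m : ℤ, 1 ≤ l → 1 ≤ m → ⁅gh l, gh m⁆ = 0) := by
  have hA : ∀ n : ℤ, ah n =
      trip K (-(evU K (n-2))) (tA K * evU K (n-1)) ((tA K - 1) * evU K (n-1)) := by
    intro n
    rcases le_or_gt 1 n with h | h
    · rw [hah n h]; simp only [trip, TensorProduct.neg_tmul]
    · have hm : (1:ℤ) ≤ 1 - n := by omega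
      have h' := hah' (1-n) hm
      rw [show (1 - (1-n) : ℤ) = n by ring, show ((1-n)-1 : ℤ) = -n by ring,
          show ((1-n)-2 : ℤ) = -n-1 by ring, evU_neg, evU_neg_sub_one] at h'
      rw [h']
      simp only [trip, mul_neg, TensorProduct.neg_tmul, sub_neg_eq_add]
  have hG : ∀ n : ℤ, 1 ≤ n → gh n =
      trip K (-(evU K (n-1))) (-(tA K * evU K (n-1))) ((tA K - 1) * evU K (n-1)) := by
    intro n hn
    rw [hgh n hn]
    simp only [trip, TensorProduct.neg_tmul, sub_eq_add_neg]
  refine ⟨?_, ?_, ?_⟩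
  · intro l m hlt
    have h1 : (1:ℤ) ≤ l - m := by omega
    rw [hA l, hA m, hG (l-m) h1, trip_lie, smul_trip]
    have hB := B1 (K := K) (l-2) (m-2)
    rw [show (m-2+1 : ℤ) = m-1 by ring, show (l-2+1 : ℤ) = l-1 by ring,
        show (l-2-(m-2)-1 : ℤ) = l-m-1 by ring] at hB
    refine trip_congr ?_ ?_ ?_
    · linear_combination (-2 : Arat K) * hB
    · linear_combination (-2 * tA K) * hB
    · linear_combination (2 * (tA K - 1)) * hB
  · intro l m hl
    rw [hG l hl, hA m, trip_lie, hA (m+l), hA (m-l), trip_sub]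
    have hC1 := C2 (K := K) (m-3) (l-1)
    rw [show (m-3+1 : ℤ) = m-2 by ring, show (m-3+(l-1)+2 : ℤ) = m+l-2 by ring,
        show (m-3-(l-1) : ℤ) = m-l-2 by ring] at hC1
    have hC2 := C2 (K := K) (m-2) (l-1)
    rw [show (m-2+1 : ℤ) = m-1 by ring, show (m-2+(l-1)+2 : ℤ) = m+l-1 by ring,
        show (m-2-(l-1) : ℤ) = m-l-1 by ring] at hC2
    have hu := urec (K := K) (m-3)
    rw [show (m-3+2 : ℤ) = m-1 by ring, show (m-3+1 : ℤ) = m-2 by ring] at hu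
    refine trip_congr ?_ ?_ ?_
    · linear_combination -hC1 + (-2 * evU K (l-1)) * hu
    · linear_combination (tA K) * hC2
    · linear_combination (tA K - 1) * hC2
  · intro l m hl hm
    rw [hG l hl, hG m hm, trip_lie]
    exact trip_eq_zero (by ring) (by ring) (by ring)
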